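/- For every real number 0 < q < 1, every positive integer k, and every real t > 0, the q,k-gamma function admits the Jackson q-integral representation Γ_{q,k}(t) = ∫_0^b x^{t-1} E_{q^k}^{-q^k x^k/[k]_q} d_q x, where b = [k]_q^{1/k}/(1-q^k)^{1/k}; explicitly, Γ_{q,k}(t) = (1-q) b ∑_{n=0}^∞ q^n (q^n b)^{t-1} E_{q^k}^{-q^k (q^n b)^k/[k]_q}. -/

import Mathlib

set_option maxHeartbeats 1600000

/-- The q-number [t]_q = (1-q^t)/(1-q). -/
noncomputable def qNum (q t : ℝ) : ℝ := (1 - q ^ t) / (1 - q)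

/-- The q,k-gamma function
Γ_{q,k}(t) = (1-q)^(1-t/k) · ∏_{j=0}^∞ (1-q^{k(j+1)})/(1-q^{t+jk}). -/
noncomputable def qkGamma (q : ℝ) (k : ℕ) (t : ℝ) : ℝ :=
  (1 - q) ^ (1 - t / (k : ℝ)) *
    ∏' j : ℕ, (1 - q ^ ((k : ℝ) * ((j : ℝ) + 1))) / (1 - q ^ (t + (j : ℝ) * (k : ℝ)))

/-- The Q-factorial [n]_Q! = ∏_{j=1}^n (1-Q^j)/(1-Q). -/
noncomputable def qFact (Q : ℝ) (n : ℕ) : ℝ :=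
  ∏ j ∈ Finset.range n, (1 - Q ^ (j + 1)) / (1 - Q)

/-- The Q-exponential E_Q^x = ∑_{n=0}^∞ Q^{n(n-1)/2} x^n/[n]_Q!. -/
noncomputable def qExp (Q x : ℝ) : ℝ :=
  ∑' n : ℕ, Q ^ (n * (n - 1) / 2) * x ^ n / qFact Q n

open Real Filter

lemma one_sub_pow_pos {Q : ℝ} (hQ0 : 0 < Q) (hQ1 : Q < 1) (n : ℕ) (hn : n ≠ 0) :
    0 < 1 - Q ^ n := by
  have : Q ^ n < 1 := pow_lt_one₀ hQ0.le hQ1 hn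
  linarith

lemma qFact_pos {Q : ℝ} (hQ0 : 0 < Q) (hQ1 : Q < 1) (n : ℕ) : 0 < qFact Q n := by
  refine Finset.prod_pos fun j _ => div_pos ?_ (by linarith)
  exact one_sub_pow_pos hQ0 hQ1 (j+1) (by omega)

lemma qFact_succ (Q : ℝ) (n : ℕ) : qFact Q (n+1) = qFact Q n * ((1 - Q ^ (n+1)) / (1 - Q)) :=
  Finset.prod_range_succ _ _

lemma one_le_qFact {Q : ℝ} (hQ0 : 0 < Q) (hQ1 : Q < 1) (n : ℕ) : 1 ≤ qFact Q n := by
  induction n with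
  | zero => simp [qFact]
  | succ n ih =>
    rw [qFact_succ]
    have hfac : 1 ≤ (1 - Q ^ (n+1)) / (1 - Q) := by
      rw [le_div_iff₀ (by linarith)]
      have h1 : Q ^ (n+1) ≤ Q ^ 1 := pow_le_pow_of_le_one hQ0.le hQ1.le (by omega)
      simp only [pow_one] at h1
      linarith
    nlinarith

lemma triangle_succ (m : ℕ) : (m+1) * m / 2 = m * (m-1) / 2 + m := by
  cases m with
  | zero => rfl
  | succ s =>
    simp only [Nat.add_sub_cancel]
    have h1 : (s+1+1) * (s+1) = (s+1) * s + 2 * (s+1) := by ring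
    obtain ⟨u, hu⟩ := Nat.even_mul_succ_self s
    have hu' : (s+1) * s = u + u := by rw [Nat.mul_comm]; exact hu
    omega

lemma summable_qexp {Q : ℝ} (hQ0 : 0 < Q) (hQ1 : Q < 1) (x : ℝ) :
    Summable (fun m : ℕ => Q ^ (m * (m - 1) / 2) * x ^ m / qFact Q m) := by
  rcases eq_or_ne x 0 with rfl | hx
  · apply summable_of_ne_finset_zero (s := {0})
    intro m hm
    simp only [Finset.mem_singleton] at hm
    simp [zero_pow hm]
  · apply summable_of_ratio_test_tendsto_lt_one (l := 0) one_pos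
    · filter_upwards with m
      have := qFact_pos hQ0 hQ1 m
      positivity
    · have key : ∀ m : ℕ, ‖Q ^ ((m+1) * ((m+1) - 1) / 2) * x ^ (m+1) / qFact Q (m+1)‖ /
          ‖Q ^ (m * (m - 1) / 2) * x ^ m / qFact Q m‖ =
          |x| * (1 - Q) * (Q ^ m / (1 - Q ^ (m+1))) := by
        intro m
        have hf := qFact_pos hQ0 hQ1 m
        have hf' := qFact_pos hQ0 hQ1 (m+1)
        have h1 := one_sub_pow_pos hQ0 hQ1 (m+1) (by omega)
        rw [show (m+1) - 1 = m from rfl, triangle_succ, qFact_succ]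
        have h2 : (0:ℝ) < 1 - Q := by linarith
        simp only [Real.norm_eq_abs, abs_div, abs_mul, abs_pow, abs_of_pos hQ0,
          abs_of_pos hf, abs_of_pos h1, abs_of_pos h2]
        rw [pow_add, pow_succ]
        have hxm : |x| ^ m ≠ 0 := pow_ne_zero _ (abs_ne_zero.mpr hx)
        field_simp
      rw [show (0:ℝ) = |x| * (1-Q) * (0 / (1 - 0)) by simp]
      apply Tendsto.congr (fun m => (key m).symm)
      apply Tendsto.const_mul
      apply Tendsto.div (tendsto_pow_atTop_nhds_zero_of_lt_one hQ0.le hQ1)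
      · apply Tendsto.const_sub
        exact (tendsto_pow_atTop_nhds_zero_of_lt_one hQ0.le hQ1).comp (tendsto_add_atTop_nat 1)
      · norm_num

lemma qExp_rec {Q : ℝ} (hQ0 : 0 < Q) (hQ1 : Q < 1) (x : ℝ) :
    qExp Q x = (1 + (1 - Q) * x) * qExp Q (Q * x) := by
  have hS1 := summable_qexp hQ0 hQ1 x
  have hS2 := summable_qexp hQ0 hQ1 (Q * x)
  have hc : Summable (fun m : ℕ => Q ^ (m * (m - 1) / 2) * x ^ m / qFact Q m
      - Q ^ (m * (m - 1) / 2) * (Q * x) ^ m / qFact Q m) := hS1.sub hS2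
  have key : ∀ m : ℕ, Q ^ ((m+1) * ((m+1) - 1) / 2) * x ^ (m+1) / qFact Q (m+1)
      - Q ^ ((m+1) * ((m+1) - 1) / 2) * (Q * x) ^ (m+1) / qFact Q (m+1)
      = (1 - Q) * x * (Q ^ (m * (m - 1) / 2) * (Q * x) ^ m / qFact Q m) := by
    intro m
    have hf := qFact_pos hQ0 hQ1 m
    have h1 := one_sub_pow_pos hQ0 hQ1 (m+1) (by omega)
    have hQ' : (1:ℝ) - Q ≠ 0 := by linarith
    rw [show (m+1) - 1 = m from rfl, triangle_succ, qFact_succ]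
    rw [div_sub_div_same, ← mul_sub]
    have e1 : x ^ (m+1) - (Q * x) ^ (m+1) = x ^ (m+1) * (1 - Q ^ (m+1)) := by
      rw [mul_pow]; ring
    rw [e1, mul_div_assoc']
    field_simp [hf.ne', h1.ne']
    ring
  have h2 : (∑' m : ℕ, (Q ^ (m * (m - 1) / 2) * x ^ m / qFact Q m
      - Q ^ (m * (m - 1) / 2) * (Q * x) ^ m / qFact Q m)) = (1 - Q) * x * qExp Q (Q * x) := by
    rw [Summable.tsum_eq_zero_add hc]
    simp only [key]
    rw [tsum_mul_left]
    have h0 : (Q ^ (0 * (0 - 1) / 2) * x ^ 0 / qFact Q 0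
      - Q ^ (0 * (0 - 1) / 2) * (Q * x) ^ 0 / qFact Q 0) = 0 := by simp
    rw [h0, zero_add, qExp]
  rw [qExp, qExp] at *
  have h3 := Summable.tsum_sub hS1 hS2
  rw [h2] at h3
  linarith [h3]

lemma qExp_near_one {Q : ℝ} (hQ0 : 0 < Q) (hQ1 : Q < 1) {y : ℝ} (hy : |y| ≤ 1/2) :
    |qExp Q y - 1| ≤ 2 * |y| := by
  have hS := summable_qexp hQ0 hQ1 y
  have h0 : qExp Q y = 1 + ∑' m : ℕ, Q ^ ((m+1) * ((m+1) - 1) / 2) * y ^ (m+1) / qFact Q (m+1) := by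
    rw [qExp, Summable.tsum_eq_zero_add hS]
    simp [qFact]
  rw [h0]
  have habs : ∀ m : ℕ, |Q ^ ((m+1) * ((m+1) - 1) / 2) * y ^ (m+1) / qFact Q (m+1)| ≤ |y| * (1/2) ^ m := by
    intro m
    have hf := qFact_pos hQ0 hQ1 (m+1)
    have hf1 := one_le_qFact hQ0 hQ1 (m+1)
    simp only [abs_div, abs_mul, abs_pow, abs_of_pos hQ0, abs_of_pos hf]
    have hQp : Q ^ ((m+1) * ((m+1) - 1) / 2) ≤ 1 := pow_le_one₀ hQ0.le hQ1.le
    calc Q ^ ((m+1) * ((m+1) - 1) / 2) * |y| ^ (m+1) / qFact Q (m+1)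
        ≤ Q ^ ((m+1) * ((m+1) - 1) / 2) * |y| ^ (m+1) / 1 := by
          apply div_le_div_of_nonneg_left (by positivity) one_pos (by linarith)
      _ = Q ^ ((m+1) * ((m+1) - 1) / 2) * (|y| * |y| ^ m) := by rw [pow_succ]; ring
      _ ≤ 1 * (|y| * |y| ^ m) := by
          apply mul_le_mul_of_nonneg_right hQp
          positivity
      _ = |y| * |y| ^ m := one_mul _
      _ ≤ |y| * (1/2) ^ m := by
          apply mul_le_mul_of_nonneg_left _ (abs_nonneg y)
          exact pow_le_pow_left₀ (abs_nonneg y) hy m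
  have hsum2 : Summable (fun m : ℕ => |y| * (1/2 : ℝ) ^ m) :=
    (summable_geometric_of_lt_one (by norm_num) (by norm_num)).mul_left _
  have hS' : Summable (fun m : ℕ => Q ^ ((m+1) * ((m+1) - 1) / 2) * y ^ (m+1) / qFact Q (m+1)) :=
    (summable_nat_add_iff 1).mpr hS
  have hbv : ∑' m : ℕ, |y| * (1/2 : ℝ) ^ m = 2 * |y| := by
    rw [tsum_mul_left, tsum_geometric_of_lt_one (by norm_num) (by norm_num)]
    norm_num; ring
  have hub : (∑' m : ℕ, Q ^ ((m+1) * ((m+1) - 1) / 2) * y ^ (m+1) / qFact Q (m+1))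
      ≤ 2 * |y| := by
    rw [← hbv]
    exact Summable.tsum_le_tsum (fun m => (le_abs_self _).trans (habs m)) hS' hsum2
  have hlb : -(2 * |y|) ≤ ∑' m : ℕ, Q ^ ((m+1) * ((m+1) - 1) / 2) * y ^ (m+1) / qFact Q (m+1) := by
    rw [← hbv, ← tsum_neg]
    exact Summable.tsum_le_tsum (fun m => (abs_le.mp (habs m)).1) hsum2.neg hS'
  rw [add_sub_cancel_left, abs_le]
  exact ⟨hlb, hub⟩

lemma neg_log_le {u c : ℝ} (hu0 : 0 ≤ u) (huc : u ≤ c) (hc : c < 1) :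
    -Real.log (1 - u) ≤ u / (1 - c) := by
  have h1 : (0:ℝ) < 1 - u := by linarith
  have h2 : (0:ℝ) < 1 - c := by linarith
  rw [← Real.log_inv]
  have h3 : Real.log (1 - u)⁻¹ ≤ (1 - u)⁻¹ - 1 := Real.log_le_sub_one_of_pos (by positivity)
  have h4 : (1 - u)⁻¹ - 1 = u / (1 - u) := by field_simp; ring
  have h5 : u / (1 - u) ≤ u / (1 - c) := by
    apply div_le_div_of_nonneg_left hu0 h2 ?_ |>.trans_eq rfl
    linarith
  linarith [h3.trans_eq h4]

lemma log_one_sub_nonpos {u : ℝ} (hu0 : 0 ≤ u) (hu1 : u < 1) : Real.log (1 - u) ≤ 0 :=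
  Real.log_nonpos (by linarith) (by linarith)

lemma summable_log_one_sub {Q : ℝ} (hQ0 : 0 < Q) (hQ1 : Q < 1) {c : ℝ} (hc0 : 0 ≤ c) (hc1 : c < 1) :
    Summable (fun j : ℕ => Real.log (1 - c * Q ^ j)) := by
  rw [← summable_neg_iff]
  refine Summable.of_nonneg_of_le ?_ ?_ ((summable_geometric_of_lt_one hQ0.le hQ1).mul_left (c / (1 - c)))
  · intro j
    have hcq : c * Q ^ j ≤ c := by
      calc c * Q ^ j ≤ c * 1 := by
            apply mul_le_mul_of_nonneg_left _ hc0
            exact pow_le_one₀ hQ0.le hQ1.le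
        _ = c := mul_one c
    have : Real.log (1 - c * Q ^ j) ≤ 0 :=
      log_one_sub_nonpos (by positivity) (lt_of_le_of_lt hcq hc1)
    linarith
  · intro j
    have hcq : c * Q ^ j ≤ c := by
      calc c * Q ^ j ≤ c * 1 := by
            apply mul_le_mul_of_nonneg_left _ hc0
            exact pow_le_one₀ hQ0.le hQ1.le
        _ = c := mul_one c
    have := neg_log_le (u := c * Q ^ j) (by positivity) hcq hc1
    calc -Real.log (1 - c * Q ^ j) ≤ c * Q ^ j / (1 - c) := this
      _ = (c / (1 - c)) * Q ^ j := by ring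

lemma hasProd_one_sub {Q : ℝ} (hQ0 : 0 < Q) (hQ1 : Q < 1) {c : ℝ} (hc0 : 0 ≤ c) (hc1 : c < 1) :
    HasProd (fun j : ℕ => 1 - c * Q ^ j)
      (Real.exp (∑' j : ℕ, Real.log (1 - c * Q ^ j))) := by
  have hpos : ∀ j : ℕ, (0:ℝ) < 1 - c * Q ^ j := by
    intro j
    have hcq : c * Q ^ j ≤ c := by
      calc c * Q ^ j ≤ c * 1 := by
            apply mul_le_mul_of_nonneg_left _ hc0
            exact pow_le_one₀ hQ0.le hQ1.le
        _ = c := mul_one c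
    linarith
  have hs := (summable_log_one_sub hQ0 hQ1 hc0 hc1).hasSum
  have := hs.rexp
  refine this.congr_fun fun j => ?_
  exact (Real.exp_log (hpos j)).symm

noncomputable def Pn (Q : ℝ) (n : ℕ) : ℝ := ∏ j ∈ Finset.range n, (1 - Q ^ (j + 1))

lemma Pn_pos {Q : ℝ} (hQ0 : 0 < Q) (hQ1 : Q < 1) (n : ℕ) : 0 < Pn Q n :=
  Finset.prod_pos fun j _ => one_sub_pow_pos hQ0 hQ1 (j+1) (by omega)

lemma Pn_succ (Q : ℝ) (n : ℕ) : Pn Q (n+1) = Pn Q n * (1 - Q ^ (n+1)) :=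
  Finset.prod_range_succ _ _

lemma Pn_antitone {Q : ℝ} (hQ0 : 0 < Q) (hQ1 : Q < 1) : Antitone (Pn Q) := by
  apply antitone_nat_of_succ_le
  intro n
  rw [Pn_succ]
  have h1 := one_sub_pow_pos hQ0 hQ1 (n+1) (by omega)
  have h2 : 1 - Q ^ (n+1) ≤ 1 := by
    have := pow_pos hQ0 (n+1); linarith
  nlinarith [Pn_pos hQ0 hQ1 n]

lemma hasProd_u {Q : ℝ} (hQ0 : 0 < Q) (hQ1 : Q < 1) :
    HasProd (fun j : ℕ => 1 - Q ^ (j+1))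
      (Real.exp (∑' j : ℕ, Real.log (1 - Q * Q ^ j))) := by
  refine (hasProd_one_sub hQ0 hQ1 hQ0.le hQ1).congr_fun fun j => ?_
  rw [pow_succ, mul_comm]

lemma P_pos {Q : ℝ} (hQ0 : 0 < Q) (hQ1 : Q < 1) : 0 < ∏' j : ℕ, (1 - Q ^ (j+1)) := by
  rw [(hasProd_u hQ0 hQ1).tprod_eq]
  exact Real.exp_pos _

lemma tendsto_Pn {Q : ℝ} (hQ0 : 0 < Q) (hQ1 : Q < 1) :
    Tendsto (Pn Q) atTop (nhds (∏' j : ℕ, (1 - Q ^ (j+1)))) := by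
  have := ((hasProd_u hQ0 hQ1).multipliable.hasProd).tendsto_prod_nat
  exact this

lemma P_le_Pn {Q : ℝ} (hQ0 : 0 < Q) (hQ1 : Q < 1) (n : ℕ) :
    (∏' j : ℕ, (1 - Q ^ (j+1))) ≤ Pn Q n := by
  apply le_of_tendsto (tendsto_Pn hQ0 hQ1)
  filter_upwards [eventually_ge_atTop n] with M hM
  exact Pn_antitone hQ0 hQ1 hM

lemma summable_h {Q x : ℝ} (hQ0 : 0 < Q) (hQ1 : Q < 1) (hx0 : 0 ≤ x) (hx1 : x < 1) :
    Summable (fun n : ℕ => x ^ n / Pn Q n) := by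
  set P := ∏' j : ℕ, (1 - Q ^ (j+1)) with hP
  have hPpos := P_pos hQ0 hQ1
  refine Summable.of_nonneg_of_le
    (fun n => div_nonneg (pow_nonneg hx0 n) (Pn_pos hQ0 hQ1 n).le) (fun n => ?_)
    ((summable_geometric_of_lt_one hx0 hx1).mul_left (1/P))
  calc x ^ n / Pn Q n ≤ x ^ n / P :=
        div_le_div_of_nonneg_left (pow_nonneg hx0 n) hPpos (P_le_Pn hQ0 hQ1 n)
    _ = 1/P * x ^ n := by ring

lemma h_rec {Q x : ℝ} (hQ0 : 0 < Q) (hQ1 : Q < 1) (hx0 : 0 ≤ x) (hx1 : x < 1) :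
    (1 - x) * (∑' n : ℕ, x ^ n / Pn Q n) = ∑' n : ℕ, (Q * x) ^ n / Pn Q n := by
  have hQx0 : 0 ≤ Q * x := by positivity
  have hQx1 : Q * x < 1 := by nlinarith
  have hS := summable_h hQ0 hQ1 hx0 hx1
  have hT := summable_h hQ0 hQ1 hQx0 hQx1
  have hc : Summable (fun n : ℕ => x ^ n / Pn Q n - (Q * x) ^ n / Pn Q n) := hS.sub hT
  have key : ∀ n : ℕ, x ^ (n+1) / Pn Q (n+1) - (Q * x) ^ (n+1) / Pn Q (n+1)
      = x * (x ^ n / Pn Q n) := by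
    intro n
    have h1 := one_sub_pow_pos hQ0 hQ1 (n+1) (by omega)
    rw [Pn_succ, div_sub_div_same]
    have e1 : x ^ (n+1) - (Q * x) ^ (n+1) = x ^ (n+1) * (1 - Q ^ (n+1)) := by
      rw [mul_pow]; ring
    rw [e1, mul_div_mul_right _ _ h1.ne', pow_succ]
    ring
  have h2 : (∑' n : ℕ, (x ^ n / Pn Q n - (Q * x) ^ n / Pn Q n))
      = x * ∑' n : ℕ, x ^ n / Pn Q n := by
    rw [Summable.tsum_eq_zero_add hc]
    simp only [key]
    rw [tsum_mul_left]
    norm_num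
  have h3 := Summable.tsum_sub hS hT
  rw [h2] at h3
  linarith

lemma h_prod {Q x : ℝ} (hQ0 : 0 < Q) (hQ1 : Q < 1) (hx0 : 0 ≤ x) (hx1 : x < 1) (N : ℕ) :
    (∏ j ∈ Finset.range N, (1 - x * Q ^ j)) * (∑' n : ℕ, x ^ n / Pn Q n)
      = ∑' n : ℕ, (Q ^ N * x) ^ n / Pn Q n := by
  induction N with
  | zero => simp
  | succ N ih =>
    have hy0 : 0 ≤ Q ^ N * x := by positivity
    have hy1 : Q ^ N * x < 1 := by
      have h1 : Q ^ N ≤ 1 := pow_le_one₀ hQ0.le hQ1.le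
      nlinarith [pow_pos hQ0 N]
    rw [Finset.prod_range_succ]
    have e1 : (∏ j ∈ Finset.range N, (1 - x * Q ^ j)) * (1 - x * Q ^ N)
        * (∑' n : ℕ, x ^ n / Pn Q n)
        = (1 - x * Q ^ N) * ((∏ j ∈ Finset.range N, (1 - x * Q ^ j))
          * (∑' n : ℕ, x ^ n / Pn Q n)) := by ring
    rw [e1, ih]
    have e2 : (1 - x * Q ^ N) = 1 - Q ^ N * x := by ring
    rw [e2, h_rec hQ0 hQ1 hy0 hy1]
    congr 1
    funext n
    congr 2
    rw [pow_succ]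
    ring

lemma h_tail_bound {Q y : ℝ} (hQ0 : 0 < Q) (hQ1 : Q < 1) (hy0 : 0 ≤ y) (hy : y ≤ 1/2) :
    |(∑' n : ℕ, y ^ n / Pn Q n) - 1| ≤ 2 / (∏' j : ℕ, (1 - Q ^ (j+1))) * y := by
  set P := ∏' j : ℕ, (1 - Q ^ (j+1)) with hP
  have hPpos := P_pos hQ0 hQ1
  have hy1 : y < 1 := by linarith
  have hS := summable_h hQ0 hQ1 hy0 hy1
  have hS' : Summable (fun n : ℕ => y ^ (n+1) / Pn Q (n+1)) := (summable_nat_add_iff 1).mpr hS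
  have h0 : (∑' n : ℕ, y ^ n / Pn Q n) = 1 + ∑' n : ℕ, y ^ (n+1) / Pn Q (n+1) := by
    rw [Summable.tsum_eq_zero_add hS]
    simp [Pn]
  rw [h0, add_sub_cancel_left]
  have hb : ∀ n : ℕ, y ^ (n+1) / Pn Q (n+1) ≤ (y / P) * (1/2) ^ n := by
    intro n
    calc y ^ (n+1) / Pn Q (n+1) ≤ y ^ (n+1) / P :=
          div_le_div_of_nonneg_left (pow_nonneg hy0 _) hPpos (P_le_Pn hQ0 hQ1 (n+1))
      _ = (y / P) * y ^ n := by rw [pow_succ]; ring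
      _ ≤ (y / P) * (1/2) ^ n := by
          apply mul_le_mul_of_nonneg_left (pow_le_pow_left₀ hy0 hy n) (by positivity)
  have hsum2 : Summable (fun n : ℕ => (y / P) * (1/2 : ℝ) ^ n) :=
    (summable_geometric_of_lt_one (by norm_num) (by norm_num)).mul_left _
  have hub : (∑' n : ℕ, y ^ (n+1) / Pn Q (n+1)) ≤ 2 / P * y := by
    calc (∑' n : ℕ, y ^ (n+1) / Pn Q (n+1)) ≤ ∑' n : ℕ, (y / P) * (1/2 : ℝ) ^ n :=
          Summable.tsum_le_tsum hb hS' hsum2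
      _ = (y / P) * ∑' n : ℕ, (1/2 : ℝ) ^ n := tsum_mul_left
      _ = 2 / P * y := by
          rw [tsum_geometric_of_lt_one (by norm_num) (by norm_num)]
          norm_num
          ring
  have hlb : (0:ℝ) ≤ ∑' n : ℕ, y ^ (n+1) / Pn Q (n+1) :=
    tsum_nonneg fun n => div_nonneg (pow_nonneg hy0 _) (Pn_pos hQ0 hQ1 _).le
  rw [abs_le]
  constructor
  · have : (0:ℝ) ≤ 2 / P * y := by positivity
    linarith
  · exact hub

lemma hasProd_v {Q x : ℝ} (hQ0 : 0 < Q) (hQ1 : Q < 1) (hx0 : 0 ≤ x) (hx1 : x < 1) :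
    HasProd (fun j : ℕ => 1 - x * Q ^ j)
      (Real.exp (∑' j : ℕ, Real.log (1 - x * Q ^ j))) :=
  hasProd_one_sub hQ0 hQ1 hx0 hx1

lemma h_mul_Pi {Q x : ℝ} (hQ0 : 0 < Q) (hQ1 : Q < 1) (hx0 : 0 ≤ x) (hx1 : x < 1) :
    (∏' j : ℕ, (1 - x * Q ^ j)) * (∑' n : ℕ, x ^ n / Pn Q n) = 1 := by
  set P := ∏' j : ℕ, (1 - Q ^ (j+1)) with hP
  have hPpos := P_pos hQ0 hQ1
  -- LHS as a limit of partial products times the sum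
  have hv := hasProd_v hQ0 hQ1 hx0 hx1
  have hvt : Tendsto (fun N => ∏ j ∈ Finset.range N, (1 - x * Q ^ j)) atTop
      (nhds (∏' j : ℕ, (1 - x * Q ^ j))) := by
    rw [hv.tprod_eq]
    exact hv.tendsto_prod_nat
  have h1 : Tendsto (fun N => (∏ j ∈ Finset.range N, (1 - x * Q ^ j))
      * (∑' n : ℕ, x ^ n / Pn Q n)) atTop
      (nhds ((∏' j : ℕ, (1 - x * Q ^ j)) * (∑' n : ℕ, x ^ n / Pn Q n))) :=
    hvt.mul_const _
  -- the same sequence (via h_prod) tends to 1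
  have h2 : Tendsto (fun N => ∑' n : ℕ, (Q ^ N * x) ^ n / Pn Q n) atTop (nhds 1) := by
    have hz : Tendsto (fun N : ℕ => (2 / P) * (Q ^ N * x)) atTop (nhds 0) := by
      have := (tendsto_pow_atTop_nhds_zero_of_lt_one hQ0.le hQ1).mul_const x
      simpa using this.const_mul (2 / P)
    have hbd : ∀ᶠ N in atTop, ‖(∑' n : ℕ, (Q ^ N * x) ^ n / Pn Q n) - 1‖
        ≤ (2 / P) * (Q ^ N * x) := by
      have hev : ∀ᶠ N in atTop, Q ^ N * x ≤ 1/2 := by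
        have hx2 : Tendsto (fun N : ℕ => Q ^ N * x) atTop (nhds 0) := by
          simpa using (tendsto_pow_atTop_nhds_zero_of_lt_one hQ0.le hQ1).mul_const x
        filter_upwards [hx2.eventually_le_const (by norm_num : (0:ℝ) < 1/2)] with N hN
        exact hN
      filter_upwards [hev] with N hN
      have hy0 : 0 ≤ Q ^ N * x := by positivity
      exact (h_tail_bound hQ0 hQ1 hy0 hN)
    have := squeeze_zero_norm' hbd hz
    have h3 : Tendsto (fun N => ((∑' n : ℕ, (Q ^ N * x) ^ n / Pn Q n) - 1) + 1) atTop
        (nhds (0 + 1)) := this.add_const 1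
    simpa using h3
  have h4 : Tendsto (fun N => (∏ j ∈ Finset.range N, (1 - x * Q ^ j))
      * (∑' n : ℕ, x ^ n / Pn Q n)) atTop (nhds 1) := by
    apply h2.congr
    intro N
    exact (h_prod hQ0 hQ1 hx0 hx1 N).symm
  exact tendsto_nhds_unique h1 h4

lemma v_pos {Q x : ℝ} (hQ0 : 0 < Q) (hQ1 : Q < 1) (hx0 : 0 ≤ x) (hx1 : x < 1) (j : ℕ) :
    0 < 1 - x * Q ^ j := by
  have h1 : x * Q ^ j ≤ x := by
    calc x * Q ^ j ≤ x * 1 := mul_le_mul_of_nonneg_left (pow_le_one₀ hQ0.le hQ1.le) hx0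
      _ = x := mul_one x
  linarith

lemma key_prod {Q x : ℝ} (hQ0 : 0 < Q) (hQ1 : Q < 1) (hx0 : 0 ≤ x) (hx1 : x < 1) :
    ∏' j : ℕ, (1 - Q ^ (j+1)) / (1 - x * Q ^ j)
      = (∏' j : ℕ, (1 - Q ^ (j+1))) * ∑' n : ℕ, x ^ n / Pn Q n := by
  have hu := hasProd_u hQ0 hQ1
  have hv := hasProd_v hQ0 hQ1 hx0 hx1
  have hSu := summable_log_one_sub hQ0 hQ1 hQ0.le hQ1
  have hSv := summable_log_one_sub hQ0 hQ1 hx0 hx1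
  have hupos : ∀ j : ℕ, (0:ℝ) < 1 - Q ^ (j+1) := fun j =>
    one_sub_pow_pos hQ0 hQ1 (j+1) (by omega)
  have hvpos : ∀ j : ℕ, (0:ℝ) < 1 - x * Q ^ j := v_pos hQ0 hQ1 hx0 hx1
  -- HasSum of log of the ratio
  have hsub : HasSum (fun j : ℕ => Real.log (1 - Q * Q ^ j) - Real.log (1 - x * Q ^ j))
      ((∑' j : ℕ, Real.log (1 - Q * Q ^ j)) - ∑' j : ℕ, Real.log (1 - x * Q ^ j)) :=
    hSu.hasSum.sub hSv.hasSum
  have hratio : HasProd (fun j : ℕ => (1 - Q ^ (j+1)) / (1 - x * Q ^ j))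
      (Real.exp ((∑' j : ℕ, Real.log (1 - Q * Q ^ j)) - ∑' j : ℕ, Real.log (1 - x * Q ^ j))) := by
    refine hsub.rexp.congr_fun fun j => ?_
    show (1 - Q ^ (j+1)) / (1 - x * Q ^ j) = Real.exp _
    rw [Real.exp_sub, Real.exp_log, Real.exp_log (hvpos j)]
    · rw [pow_succ, mul_comm (Q ^ j) Q]
    · have := hupos j
      rw [pow_succ, mul_comm (Q ^ j) Q] at this
      exact this
  rw [hratio.tprod_eq, Real.exp_sub]
  have e1 : Real.exp (∑' j : ℕ, Real.log (1 - Q * Q ^ j)) = ∏' j : ℕ, (1 - Q ^ (j+1)) :=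
    hu.tprod_eq.symm
  have e2 : Real.exp (∑' j : ℕ, Real.log (1 - x * Q ^ j)) = ∏' j : ℕ, (1 - x * Q ^ j) :=
    hv.tprod_eq.symm
  rw [e1, e2]
  have hPi := h_mul_Pi hQ0 hQ1 hx0 hx1
  have hPine : (∏' j : ℕ, (1 - x * Q ^ j)) ≠ 0 := by
    rw [hv.tprod_eq]
    exact (Real.exp_pos _).ne'
  have hPi' : (∑' n : ℕ, x ^ n / Pn Q n) * ∏' j : ℕ, (1 - x * Q ^ j) = 1 := by
    rw [mul_comm]; exact hPi
  rw [div_eq_iff hPine, mul_assoc, hPi', mul_one]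

lemma g_rec {Q : ℝ} (hQ0 : 0 < Q) (hQ1 : Q < 1) (n : ℕ) :
    qExp Q (-(Q ^ (n+1) / (1 - Q))) = (1 - Q ^ (n+1)) * qExp Q (-(Q ^ (n+2) / (1 - Q))) := by
  have hQne : (1:ℝ) - Q ≠ 0 := by linarith
  have := qExp_rec hQ0 hQ1 (-(Q ^ (n+1) / (1 - Q)))
  have e1 : Q * -(Q ^ (n+1) / (1 - Q)) = -(Q ^ (n+2) / (1 - Q)) := by
    rw [pow_succ]
    ring
  have e2 : 1 + (1 - Q) * -(Q ^ (n+1) / (1 - Q)) = 1 - Q ^ (n+1) := by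
    field_simp
    ring
  rw [e1, e2] at this
  exact this

lemma g_const {Q : ℝ} (hQ0 : 0 < Q) (hQ1 : Q < 1) (n : ℕ) :
    Pn Q n * qExp Q (-(Q ^ (n+1) / (1 - Q))) = qExp Q (-(Q / (1 - Q))) := by
  induction n with
  | zero => simp [Pn]
  | succ n ih =>
    rw [Pn_succ, show n + 1 + 1 = n + 2 from rfl]
    calc Pn Q n * (1 - Q ^ (n+1)) * qExp Q (-(Q ^ (n+2) / (1 - Q)))
        = Pn Q n * ((1 - Q ^ (n+1)) * qExp Q (-(Q ^ (n+2) / (1 - Q)))) := by ring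
      _ = Pn Q n * qExp Q (-(Q ^ (n+1) / (1 - Q))) := by rw [← g_rec hQ0 hQ1 n]
      _ = qExp Q (-(Q / (1 - Q))) := ih

lemma tendsto_g {Q : ℝ} (hQ0 : 0 < Q) (hQ1 : Q < 1) :
    Tendsto (fun n : ℕ => qExp Q (-(Q ^ (n+1) / (1 - Q)))) atTop (nhds 1) := by
  have hQne : (0:ℝ) < 1 - Q := by linarith
  have hz : Tendsto (fun n : ℕ => (2 / (1 - Q)) * Q ^ (n+1)) atTop (nhds 0) := by
    have h1 : Tendsto (fun n : ℕ => Q ^ (n+1)) atTop (nhds 0) :=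
      (tendsto_pow_atTop_nhds_zero_of_lt_one hQ0.le hQ1).comp (tendsto_add_atTop_nat 1)
    simpa using h1.const_mul (2 / (1 - Q))
  have hbd : ∀ᶠ n in atTop, ‖qExp Q (-(Q ^ (n+1) / (1 - Q))) - 1‖ ≤ (2 / (1 - Q)) * Q ^ (n+1) := by
    have hev : ∀ᶠ n in atTop, Q ^ (n+1) / (1 - Q) ≤ 1/2 := by
      have h1 : Tendsto (fun n : ℕ => Q ^ (n+1) / (1 - Q)) atTop (nhds 0) := by
        have h2 : Tendsto (fun n : ℕ => Q ^ (n+1)) atTop (nhds 0) :=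
          (tendsto_pow_atTop_nhds_zero_of_lt_one hQ0.le hQ1).comp (tendsto_add_atTop_nat 1)
        simpa using h2.div_const (1 - Q)
      exact h1.eventually_le_const (by norm_num : (0:ℝ) < 1/2)
    filter_upwards [hev] with n hn
    have hnn : (0:ℝ) ≤ Q ^ (n+1) / (1 - Q) := div_nonneg (pow_pos hQ0 _).le hQne.le
    have habs : |(-(Q ^ (n+1) / (1 - Q)))| ≤ 1/2 := by
      rw [abs_neg, abs_of_nonneg hnn]
      exact hn
    have h5 := qExp_near_one hQ0 hQ1 habs
    rw [Real.norm_eq_abs]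
    calc |qExp Q (-(Q ^ (n+1) / (1 - Q))) - 1| ≤ 2 * |(-(Q ^ (n+1) / (1 - Q)))| := h5
      _ = (2 / (1 - Q)) * Q ^ (n+1) := by
          rw [abs_neg, abs_of_nonneg hnn]; ring
  have := squeeze_zero_norm' hbd hz
  have h3 := this.add_const 1
  simpa using h3

lemma g_eq {Q : ℝ} (hQ0 : 0 < Q) (hQ1 : Q < 1) (n : ℕ) :
    qExp Q (-(Q ^ (n+1) / (1 - Q))) = (∏' j : ℕ, (1 - Q ^ (j+1))) / Pn Q n := by
  have hPn := Pn_pos hQ0 hQ1 n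
  -- the constant sequence Pn n * g n tends to P * 1
  have h1 : Tendsto (fun m : ℕ => Pn Q m * qExp Q (-(Q ^ (m+1) / (1 - Q)))) atTop
      (nhds ((∏' j : ℕ, (1 - Q ^ (j+1))) * 1)) :=
    (tendsto_Pn hQ0 hQ1).mul (tendsto_g hQ0 hQ1)
  have h2 : Tendsto (fun _ : ℕ => qExp Q (-(Q / (1 - Q)))) atTop
      (nhds (qExp Q (-(Q / (1 - Q))))) := tendsto_const_nhds
  have h3 : qExp Q (-(Q / (1 - Q))) = (∏' j : ℕ, (1 - Q ^ (j+1))) * 1 := by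
    apply tendsto_nhds_unique _ h1
    apply h2.congr
    intro m
    exact (g_const hQ0 hQ1 m).symm
  have h4 := g_const hQ0 hQ1 n
  rw [h3, mul_one] at h4
  field_simp [hPn.ne'] at h4 ⊢
  linarith [h4]

lemma core_identity {Q x : ℝ} (hQ0 : 0 < Q) (hQ1 : Q < 1) (hx0 : 0 ≤ x) (hx1 : x < 1) :
    ∏' j : ℕ, (1 - Q ^ (j+1)) / (1 - x * Q ^ j)
      = ∑' n : ℕ, x ^ n * qExp Q (-(Q ^ (n+1) / (1 - Q))) := by
  rw [key_prod hQ0 hQ1 hx0 hx1, ← tsum_mul_left]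
  congr 1
  funext n
  rw [g_eq hQ0 hQ1 n]
  ring

theorem qkGamma_jackson_integral (q : ℝ) (hq0 : 0 < q) (hq1 : q < 1)
    (k : ℕ) (hk : 0 < k) (t : ℝ) (ht : 0 < t)
    (b : ℝ) (hb : b = qNum q (k : ℝ) ^ ((1 : ℝ) / (k : ℝ)) / (1 - q ^ k) ^ ((1 : ℝ) / (k : ℝ))) :
    qkGamma q k t =
      (1 - q) * b * ∑' n : ℕ, q ^ n * (q ^ n * b) ^ (t - 1) *
        qExp (q ^ k) (-(q ^ k * (q ^ n * b) ^ k / qNum q (k : ℝ))) := by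
  have hq' : (0:ℝ) < 1 - q := by linarith
  have hQ0 : 0 < (q ^ k) := pow_pos hq0 k
  have hQ1 : (q ^ k) < 1 := pow_lt_one₀ hq0.le hq1 hk.ne'
  have hQ' : (0:ℝ) < 1 - (q ^ k) := by linarith
  have hkR : (0:ℝ) < (k:ℝ) := by exact_mod_cast hk
  have hx0 : 0 < (q ^ t) := Real.rpow_pos_of_pos hq0 t
  have hx1 : (q ^ t) < 1 := Real.rpow_lt_one hq0.le hq1 ht
  -- qNum computation
  have hqNum : qNum q (k:ℝ) = (1 - (q ^ k)) / (1 - q) := by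
    rw [qNum, Real.rpow_natCast]
  have hqNumpos : 0 < qNum q (k:ℝ) := by rw [hqNum]; positivity
  -- b as a power of (1-q)
  have hb' : b = (1 - q) ^ (-(1/(k:ℝ))) := by
    rw [hb, hqNum, ← Real.div_rpow (by positivity) hQ'.le]
    have e : (1 - (q ^ k)) / (1 - q) / (1 - (q ^ k)) = ((1-q)⁻¹) := by
      field_simp
    rw [e, ← Real.rpow_neg_one (1-q), ← Real.rpow_mul hq'.le]
    congr 1
    ring
  have hbpos : 0 < b := by rw [hb']; exact Real.rpow_pos_of_pos hq' _
  have hbk : b ^ k = (1 - q)⁻¹ := by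
    rw [← Real.rpow_natCast b k, hb', ← Real.rpow_mul hq'.le]
    rw [show -(1/(k:ℝ)) * (k:ℝ) = -1 by field_simp]
    exact Real.rpow_neg_one _
  -- the qExp argument
  have harg : ∀ n : ℕ, -(q ^ k * (q ^ n * b) ^ k / qNum q (k:ℝ)) = -((q ^ k) ^ (n+1) / (1 - (q ^ k))) := by
    intro n
    rw [hqNum, mul_pow, hbk]
    have e1 : (q ^ n) ^ k = (q ^ k) ^ n := by
      rw [← pow_mul, ← pow_mul, Nat.mul_comm]
    rw [e1, pow_succ, neg_inj, div_eq_div_iff (by positivity) hQ'.ne']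
    field_simp
  -- the coefficient
  have hcoef : ∀ n : ℕ, (q:ℝ) ^ n * (q ^ n * b) ^ (t-1) = (q ^ t) ^ n * b ^ (t-1) := by
    intro n
    have hqn : (0:ℝ) < q ^ n := pow_pos hq0 n
    rw [Real.mul_rpow hqn.le hbpos.le]
    have e1 : (q:ℝ) ^ n * (q ^ n : ℝ) ^ (t-1) = ((q:ℝ) ^ n) ^ t := by
      nth_rewrite 1 [← Real.rpow_one ((q:ℝ) ^ n)]
      rw [← Real.rpow_add hqn]
      norm_num
    rw [← mul_assoc, e1]
    have e2 : ((q:ℝ) ^ n) ^ t = (q ^ t) ^ n := by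
      rw [← Real.rpow_natCast q n, ← Real.rpow_mul hq0.le, mul_comm,
        Real.rpow_mul hq0.le, Real.rpow_natCast]
    rw [e2]
  -- rewriting the infinite product
  have hprod : (∏' j : ℕ, (1 - q ^ ((k : ℝ) * ((j : ℝ) + 1))) / (1 - q ^ (t + (j : ℝ) * (k : ℝ))))
      = ∏' j : ℕ, (1 - (q ^ k) ^ (j+1)) / (1 - (q ^ t) * (q ^ k) ^ j) := by
    congr 1
    funext j
    have e1 : q ^ ((k : ℝ) * ((j : ℝ) + 1)) = (q ^ k) ^ (j+1) := by
      rw [show (k : ℝ) * ((j : ℝ) + 1) = ((k * (j+1) : ℕ) : ℝ) by push_cast; ring,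
        Real.rpow_natCast, pow_mul]
    have e2 : q ^ (t + (j : ℝ) * (k : ℝ)) = (q ^ t) * (q ^ k) ^ j := by
      rw [Real.rpow_add hq0, show (j : ℝ) * (k : ℝ) = ((j * k : ℕ) : ℝ) by push_cast; ring,
        Real.rpow_natCast, Nat.mul_comm, pow_mul]
    rw [e1, e2]
  -- prefactor
  have hpref : (1 - q) * b * b ^ (t-1) = (1 - q) ^ (1 - t/(k:ℝ)) := by
    rw [hb', ← Real.rpow_mul hq'.le]
    nth_rewrite 1 [← Real.rpow_one (1-q)]
    rw [← Real.rpow_add hq', ← Real.rpow_add hq']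
    congr 1
    field_simp
    ring
  -- assemble
  rw [qkGamma, hprod, core_identity hQ0 hQ1 hx0.le hx1]
  have hterm : ∀ n : ℕ, q ^ n * (q ^ n * b) ^ (t - 1) *
        qExp (q ^ k) (-(q ^ k * (q ^ n * b) ^ k / qNum q (k:ℝ)))
      = b ^ (t-1) * ((q ^ t) ^ n * qExp (q ^ k) (-((q ^ k) ^ (n+1) / (1 - (q ^ k))))) := by
    intro n
    rw [harg n, hcoef n]
    ring
  calc (1 - q) ^ (1 - t/(k:ℝ)) * ∑' n : ℕ, (q ^ t) ^ n * qExp (q ^ k) (-((q ^ k) ^ (n+1) / (1 - (q ^ k))))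
      = (1 - q) * b * (b ^ (t-1) * ∑' n : ℕ, (q ^ t) ^ n * qExp (q ^ k) (-((q ^ k) ^ (n+1) / (1 - (q ^ k))))) := by
        rw [← hpref]; ring
    _ = (1 - q) * b * ∑' n : ℕ, b ^ (t-1) * ((q ^ t) ^ n * qExp (q ^ k) (-((q ^ k) ^ (n+1) / (1 - (q ^ k))))) := by
        rw [tsum_mul_left]
    _ = (1 - q) * b * ∑' n : ℕ, q ^ n * (q ^ n * b) ^ (t - 1) *
          qExp (q ^ k) (-(q ^ k * (q ^ n * b) ^ k / qNum q (k:ℝ))) := by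
        congr 1
        exact (tsum_congr hterm).symm
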